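/- (Theorem 2) Let f : [0,∞)² → ℂ be locally Lebesgue integrable. The double integral ∫₀^∞∫₀^∞ f(u,v) du dv converges regularly if and only if (i) it converges in Pringsheim's sense, and (ii) the finite limit of the 'horizontal strip' integral ∫₀^{x₁} ∫_y^{y₁} f(u,v) du dv as x₁ → ∞ exists locally uniformly in (y, y₁) with y₁ > y ≥ 0 (i.e. for every c > 0, uniformly over 0 ≤ y < y₁ ≤ c), and the finite limit of the 'vertical strip' integral ∫_x^{x₁} ∫₀^{y₁} f(u,v) du dv as y₁ → ∞ exists locally uniformly in (x, x₁) with x₁ > x ≥ 0. -/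

import Mathlib

open MeasureTheory Set

open MeasureTheory Set Filter

namespace RegConvAux

noncomputable def J (f : ℝ × ℝ → ℂ) (x x₁ y y₁ : ℝ) : ℂ :=
  ∫ p in Ioc x x₁ ×ˢ Ioc y y₁, f p

variable {f : ℝ × ℝ → ℂ}
variable (hloc : ∀ a₁ b₁ a₂ b₂ : ℝ, 0 ≤ a₁ → 0 ≤ a₂ →
      IntegrableOn f (Icc a₁ b₁ ×ˢ Icc a₂ b₂))

include hloc

lemma integ {x x₁ y y₁ : ℝ} (hx : 0 ≤ x) (hy : 0 ≤ y) :
    IntegrableOn f (Ioc x x₁ ×ˢ Ioc y y₁) :=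
  (hloc x x₁ y y₁ hx hy).mono_set
    (Set.prod_mono Set.Ioc_subset_Icc_self Set.Ioc_subset_Icc_self)

omit hloc in
lemma Jzero_h {x x₁ y y₁ : ℝ} (h : x₁ ≤ x) : J f x x₁ y y₁ = 0 := by
  simp [J, Set.Ioc_eq_empty (not_lt.2 h)]

omit hloc in
lemma Jzero_v {x x₁ y y₁ : ℝ} (h : y₁ ≤ y) : J f x x₁ y y₁ = 0 := by
  simp [J, Set.Ioc_eq_empty (not_lt.2 h)]

lemma msplit_h {x m x₁ y y₁ : ℝ} (hx : 0 ≤ x) (hm : x ≤ m) (hm' : m ≤ x₁) (hy : 0 ≤ y) :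
    J f x x₁ y y₁ = J f x m y y₁ + J f m x₁ y y₁ := by
  unfold J
  rw [← setIntegral_union (Set.Disjoint.set_prod_left (Set.Ioc_disjoint_Ioc_of_le le_rfl) _ _)
      (measurableSet_Ioc.prod measurableSet_Ioc)
      (integ hloc hx hy) (integ hloc (hx.trans hm) hy), ← Set.union_prod,
      Set.Ioc_union_Ioc_eq_Ioc hm hm']

lemma msplit_v {x x₁ y m y₁ : ℝ} (hx : 0 ≤ x) (hy : 0 ≤ y) (hm : y ≤ m) (hm' : m ≤ y₁) :
    J f x x₁ y y₁ = J f x x₁ y m + J f x x₁ m y₁ := by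
  unfold J
  rw [← setIntegral_union (Set.Disjoint.set_prod_right (Set.Ioc_disjoint_Ioc_of_le le_rfl) _ _)
      (measurableSet_Ioc.prod measurableSet_Ioc)
      (integ hloc hx hy) (integ hloc hx (hy.trans hm)), ← Set.prod_union,
      Set.Ioc_union_Ioc_eq_Ioc hm hm']

lemma four_term {x x₁ y y₁ : ℝ} (hx : 0 ≤ x) (hx' : x ≤ x₁) (hy : 0 ≤ y) (hy' : y ≤ y₁) :
    J f x x₁ y y₁ = J f 0 x₁ 0 y₁ - J f 0 x 0 y₁ - J f 0 x₁ 0 y + J f 0 x 0 y := by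
  have h1 : J f x x₁ 0 y₁ = J f x x₁ 0 y + J f x x₁ y y₁ :=
    msplit_v hloc hx le_rfl hy hy'
  have h2 : J f 0 x₁ 0 y₁ = J f 0 x 0 y₁ + J f x x₁ 0 y₁ :=
    msplit_h hloc le_rfl hx hx' le_rfl
  have h3 : J f 0 x₁ 0 y = J f 0 x 0 y + J f x x₁ 0 y :=
    msplit_h hloc le_rfl hx hx' le_rfl
  linear_combination -h1 - h2 + h3

omit hloc in
/-- Weak (non-strict) version of the regular-convergence bound. -/
lemma Jbound {ρ ε : ℝ} (hε : 0 < ε)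
    (hr : ∀ x x₁ y y₁ : ℝ, 0 ≤ x → x < x₁ → 0 ≤ y → y < y₁ → ρ < max x y →
      ‖J f x x₁ y y₁‖ < ε)
    {x x₁ y y₁ : ℝ} (hx : 0 ≤ x) (hy : 0 ≤ y)
    (hm : ρ < max x y) : ‖J f x x₁ y y₁‖ ≤ ε := by
  rcases le_or_gt x₁ x with h | h
  · rw [Jzero_h h, norm_zero]; exact hε.le
  rcases le_or_gt y₁ y with h' | h'
  · rw [Jzero_v h', norm_zero]; exact hε.le
  exact (hr x x₁ y y₁ hx h hy h' hm).le

/-- The horizontal strip sequence is Cauchy, assuming regular convergence. -/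
lemma strip_cauchy_h
    (hreg : ∀ ε : ℝ, 0 < ε → ∃ ρ : ℝ, 0 < ρ ∧ ∀ x x₁ y y₁ : ℝ,
      0 ≤ x → x < x₁ → 0 ≤ y → y < y₁ → ρ < max x y → ‖J f x x₁ y y₁‖ < ε)
    {y y₁ : ℝ} (hy : 0 ≤ y) : CauchySeq (fun n : ℕ => J f 0 n y y₁) := by
  rw [Metric.cauchySeq_iff']
  intro ε hε
  obtain ⟨ρ, hρ, hr⟩ := hreg (ε / 2) (by positivity)
  refine ⟨⌈ρ⌉₊ + 1, fun n hn => ?_⟩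
  have hNρ : ρ < ((⌈ρ⌉₊ + 1 : ℕ) : ℝ) := by
    push_cast; exact lt_of_le_of_lt (Nat.le_ceil ρ) (by linarith)
  have hNn : ((⌈ρ⌉₊ + 1 : ℕ) : ℝ) ≤ (n : ℝ) := by exact_mod_cast hn
  have hsp : J f 0 n y y₁ = J f 0 (⌈ρ⌉₊ + 1 : ℕ) y y₁ + J f (⌈ρ⌉₊ + 1 : ℕ) n y y₁ :=
    msplit_h hloc le_rfl (by positivity) hNn hy
  rw [dist_eq_norm, hsp]
  have hb : ‖J f (⌈ρ⌉₊ + 1 : ℕ) n y y₁‖ ≤ ε / 2 :=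
    Jbound (by positivity) hr (by positivity) hy
      (lt_of_lt_of_le hNρ (le_max_left _ _))
  calc ‖J f 0 (⌈ρ⌉₊+1:ℕ) y y₁ + J f (⌈ρ⌉₊+1:ℕ) n y y₁ - J f 0 (⌈ρ⌉₊+1:ℕ) y y₁‖
      = ‖J f (⌈ρ⌉₊+1:ℕ) n y y₁‖ := by ring_nf
    _ ≤ ε / 2 := hb
    _ < ε := by linarith

end RegConvAux

namespace RegConvAux

open Filter

variable {f : ℝ × ℝ → ℂ}
variable (hloc : ∀ a₁ b₁ a₂ b₂ : ℝ, 0 ≤ a₁ → 0 ≤ a₂ →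
      IntegrableOn f (Icc a₁ b₁ ×ˢ Icc a₂ b₂))

noncomputable def Hlim (f : ℝ × ℝ → ℂ) (y y₁ : ℝ) : ℂ :=
  limUnder atTop (fun n : ℕ => J f 0 n y y₁)

noncomputable def Vlim (f : ℝ × ℝ → ℂ) (x x₁ : ℝ) : ℂ :=
  limUnder atTop (fun n : ℕ => J f x x₁ 0 n)

noncomputable def Ilim (f : ℝ × ℝ → ℂ) : ℂ :=
  limUnder atTop (fun n : ℕ => J f 0 n 0 n)

include hloc

lemma strip_cauchy_v
    (hreg : ∀ ε : ℝ, 0 < ε → ∃ ρ : ℝ, 0 < ρ ∧ ∀ x x₁ y y₁ : ℝ,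
      0 ≤ x → x < x₁ → 0 ≤ y → y < y₁ → ρ < max x y → ‖J f x x₁ y y₁‖ < ε)
    {x x₁ : ℝ} (hx : 0 ≤ x) : CauchySeq (fun n : ℕ => J f x x₁ 0 n) := by
  rw [Metric.cauchySeq_iff']
  intro ε hε
  obtain ⟨ρ, hρ, hr⟩ := hreg (ε / 2) (by positivity)
  refine ⟨⌈ρ⌉₊ + 1, fun n hn => ?_⟩
  have hNρ : ρ < ((⌈ρ⌉₊ + 1 : ℕ) : ℝ) := by
    push_cast; exact lt_of_le_of_lt (Nat.le_ceil ρ) (by linarith)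
  have hNn : ((⌈ρ⌉₊ + 1 : ℕ) : ℝ) ≤ (n : ℝ) := by exact_mod_cast hn
  have hsp : J f x x₁ 0 n = J f x x₁ 0 (⌈ρ⌉₊ + 1 : ℕ) + J f x x₁ (⌈ρ⌉₊ + 1 : ℕ) n :=
    msplit_v hloc hx le_rfl (by positivity) hNn
  rw [dist_eq_norm, hsp]
  have hb : ‖J f x x₁ (⌈ρ⌉₊ + 1 : ℕ) n‖ ≤ ε / 2 :=
    Jbound (by positivity) hr hx (by positivity)
      (lt_of_lt_of_le hNρ (le_max_right _ _))
  calc ‖J f x x₁ 0 (⌈ρ⌉₊+1:ℕ) + J f x x₁ (⌈ρ⌉₊+1:ℕ) n - J f x x₁ 0 (⌈ρ⌉₊+1:ℕ)‖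
      = ‖J f x x₁ (⌈ρ⌉₊+1:ℕ) n‖ := by ring_nf
    _ ≤ ε / 2 := hb
    _ < ε := by linarith

lemma strip_est_h
    (hreg : ∀ ε : ℝ, 0 < ε → ∃ ρ : ℝ, 0 < ρ ∧ ∀ x x₁ y y₁ : ℝ,
      0 ≤ x → x < x₁ → 0 ≤ y → y < y₁ → ρ < max x y → ‖J f x x₁ y y₁‖ < ε) :
    ∀ c ε : ℝ, 0 < c → 0 < ε → ∃ ρ₃ : ℝ, 0 < ρ₃ ∧
      ∀ y y₁ x₁ : ℝ, 0 ≤ y → y < y₁ → y₁ ≤ c → ρ₃ < x₁ →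
        ‖J f 0 x₁ y y₁ - Hlim f y y₁‖ < ε := by
  intro c ε _hc hε
  obtain ⟨ρ, hρ, hr⟩ := hreg (ε / 3) (by positivity)
  refine ⟨ρ, hρ, fun y y₁ x₁ hy _hyy _hyc hρx₁ => ?_⟩
  have htend : Tendsto (fun n : ℕ => J f 0 n y y₁) atTop (nhds (Hlim f y y₁)) :=
    (strip_cauchy_h hloc hreg hy).tendsto_limUnder
  obtain ⟨N, hN⟩ := Metric.tendsto_atTop.1 htend (ε / 3) (by positivity)
  set n := max N (⌈x₁⌉₊ + 1) with hn
  have hx₁0 : 0 ≤ x₁ := (hρ.trans hρx₁).le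
  have hx₁n : x₁ ≤ (n : ℝ) := by
    refine le_trans (Nat.le_ceil x₁) ?_
    exact_mod_cast le_trans (Nat.le_succ _) (le_max_right N _)
  have hsp : J f 0 n y y₁ = J f 0 x₁ y y₁ + J f x₁ n y y₁ :=
    msplit_h hloc le_rfl hx₁0 hx₁n hy
  have h1 : ‖J f x₁ n y y₁‖ ≤ ε / 3 :=
    Jbound (by positivity) hr hx₁0 hy (lt_of_lt_of_le hρx₁ (le_max_left _ _))
  have h2 : ‖J f 0 n y y₁ - Hlim f y y₁‖ < ε / 3 := by
    rw [← dist_eq_norm]; exact hN n (le_max_left _ _)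
  calc ‖J f 0 x₁ y y₁ - Hlim f y y₁‖
      = ‖(J f 0 n y y₁ - Hlim f y y₁) - J f x₁ n y y₁‖ := by rw [hsp]; ring_nf
    _ ≤ ‖J f 0 n y y₁ - Hlim f y y₁‖ + ‖J f x₁ n y y₁‖ := norm_sub_le _ _
    _ < ε := by linarith

lemma strip_est_v
    (hreg : ∀ ε : ℝ, 0 < ε → ∃ ρ : ℝ, 0 < ρ ∧ ∀ x x₁ y y₁ : ℝ,
      0 ≤ x → x < x₁ → 0 ≤ y → y < y₁ → ρ < max x y → ‖J f x x₁ y y₁‖ < ε) :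
    ∀ c ε : ℝ, 0 < c → 0 < ε → ∃ ρ₃ : ℝ, 0 < ρ₃ ∧
      ∀ x x₁ y₁ : ℝ, 0 ≤ x → x < x₁ → x₁ ≤ c → ρ₃ < y₁ →
        ‖J f x x₁ 0 y₁ - Vlim f x x₁‖ < ε := by
  intro c ε _hc hε
  obtain ⟨ρ, hρ, hr⟩ := hreg (ε / 3) (by positivity)
  refine ⟨ρ, hρ, fun x x₁ y₁ hx _hxx _hxc hρy₁ => ?_⟩
  have htend : Tendsto (fun n : ℕ => J f x x₁ 0 n) atTop (nhds (Vlim f x x₁)) :=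
    (strip_cauchy_v hloc hreg hx).tendsto_limUnder
  obtain ⟨N, hN⟩ := Metric.tendsto_atTop.1 htend (ε / 3) (by positivity)
  set n := max N (⌈y₁⌉₊ + 1) with hn
  have hy₁0 : 0 ≤ y₁ := (hρ.trans hρy₁).le
  have hy₁n : y₁ ≤ (n : ℝ) := by
    refine le_trans (Nat.le_ceil y₁) ?_
    exact_mod_cast le_trans (Nat.le_succ _) (le_max_right N _)
  have hsp : J f x x₁ 0 n = J f x x₁ 0 y₁ + J f x x₁ y₁ n :=
    msplit_v hloc hx le_rfl hy₁0 hy₁n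
  have h1 : ‖J f x x₁ y₁ n‖ ≤ ε / 3 :=
    Jbound (by positivity) hr hx hy₁0 (lt_of_lt_of_le hρy₁ (le_max_right _ _))
  have h2 : ‖J f x x₁ 0 n - Vlim f x x₁‖ < ε / 3 := by
    rw [← dist_eq_norm]; exact hN n (le_max_left _ _)
  calc ‖J f x x₁ 0 y₁ - Vlim f x x₁‖
      = ‖(J f x x₁ 0 n - Vlim f x x₁) - J f x x₁ y₁ n‖ := by rw [hsp]; ring_nf
    _ ≤ ‖J f x x₁ 0 n - Vlim f x x₁‖ + ‖J f x x₁ y₁ n‖ := norm_sub_le _ _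
    _ < ε := by linarith

lemma diag_cauchy
    (hreg : ∀ ε : ℝ, 0 < ε → ∃ ρ : ℝ, 0 < ρ ∧ ∀ x x₁ y y₁ : ℝ,
      0 ≤ x → x < x₁ → 0 ≤ y → y < y₁ → ρ < max x y → ‖J f x x₁ y y₁‖ < ε) :
    CauchySeq (fun n : ℕ => J f 0 n 0 n) := by
  rw [Metric.cauchySeq_iff']
  intro ε hε
  obtain ⟨ρ, hρ, hr⟩ := hreg (ε / 3) (by positivity)
  refine ⟨⌈ρ⌉₊ + 1, fun n hn => ?_⟩
  set N : ℕ := ⌈ρ⌉₊ + 1 with hNdef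
  have hNρ : ρ < (N : ℝ) := by
    rw [hNdef]; push_cast; exact lt_of_le_of_lt (Nat.le_ceil ρ) (by linarith)
  have hNn : ((N : ℕ) : ℝ) ≤ (n : ℝ) := by exact_mod_cast hn
  have s1 : J f 0 n 0 n = J f 0 N 0 n + J f N n 0 n :=
    msplit_h hloc le_rfl (by positivity) hNn le_rfl
  have s2 : J f 0 N 0 n = J f 0 N 0 N + J f 0 N N n :=
    msplit_v hloc le_rfl le_rfl (by positivity) hNn
  have b1 : ‖J f N n 0 n‖ ≤ ε / 3 :=
    Jbound (by positivity) hr (by positivity) le_rfl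
      (lt_of_lt_of_le hNρ (le_max_left _ _))
  have b2 : ‖J f 0 N N n‖ ≤ ε / 3 :=
    Jbound (by positivity) hr le_rfl (by positivity)
      (lt_of_lt_of_le hNρ (le_max_right _ _))
  have key : J f 0 n 0 n - J f 0 N 0 N = J f N n 0 n + J f 0 N N n := by
    linear_combination s1 + s2
  rw [dist_eq_norm, key]
  calc ‖J f N n 0 n + J f 0 N N n‖ ≤ ‖J f N n 0 n‖ + ‖J f 0 N N n‖ := norm_add_le _ _
    _ < ε := by linarith

lemma pringsheim_est
    (hreg : ∀ ε : ℝ, 0 < ε → ∃ ρ : ℝ, 0 < ρ ∧ ∀ x x₁ y y₁ : ℝ,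
      0 ≤ x → x < x₁ → 0 ≤ y → y < y₁ → ρ < max x y → ‖J f x x₁ y y₁‖ < ε) :
    ∀ ε : ℝ, 0 < ε → ∃ ρ : ℝ, 0 < ρ ∧ ∀ x y : ℝ, ρ < x → ρ < y →
      ‖J f 0 x 0 y - Ilim f‖ < ε := by
  intro ε hε
  obtain ⟨ρ₀, hρ₀, hr⟩ := hreg (ε / 4) (by positivity)
  have htend : Tendsto (fun n : ℕ => J f 0 n 0 n) atTop (nhds (Ilim f)) :=
    (diag_cauchy hloc hreg).tendsto_limUnder
  obtain ⟨N₀, hN₀⟩ := Metric.tendsto_atTop.1 htend (ε / 4) (by positivity)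
  set n := max N₀ (⌈ρ₀⌉₊ + 1) with hn
  have hρ₀n : ρ₀ < (n : ℝ) := by
    have : ρ₀ < ((⌈ρ₀⌉₊ + 1 : ℕ) : ℝ) := by
      push_cast; exact lt_of_le_of_lt (Nat.le_ceil ρ₀) (by linarith)
    exact lt_of_lt_of_le this (by exact_mod_cast le_max_right N₀ _)
  refine ⟨(n : ℝ), hρ₀.trans hρ₀n, fun x y hnx hny => ?_⟩
  have s1 : J f 0 x 0 y = J f 0 n 0 y + J f n x 0 y :=
    msplit_h hloc le_rfl (by positivity) hnx.le le_rfl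
  have s2 : J f 0 n 0 y = J f 0 n 0 n + J f 0 n n y :=
    msplit_v hloc le_rfl le_rfl (by positivity) hny.le
  have b1 : ‖J f n x 0 y‖ ≤ ε / 4 :=
    Jbound (by positivity) hr (by positivity) le_rfl
      (lt_of_lt_of_le hρ₀n (le_max_left _ _))
  have b2 : ‖J f 0 n n y‖ ≤ ε / 4 :=
    Jbound (by positivity) hr le_rfl (by positivity)
      (lt_of_lt_of_le hρ₀n (le_max_right _ _))
  have b3 : ‖J f 0 n 0 n - Ilim f‖ < ε / 4 := by
    rw [← dist_eq_norm]; exact hN₀ n (le_max_left _ _)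
  have key : J f 0 x 0 y - Ilim f
      = J f n x 0 y + J f 0 n n y + (J f 0 n 0 n - Ilim f) := by
    linear_combination s1 + s2
  rw [key]
  calc ‖J f n x 0 y + J f 0 n n y + (J f 0 n 0 n - Ilim f)‖
      ≤ ‖J f n x 0 y + J f 0 n n y‖ + ‖J f 0 n 0 n - Ilim f‖ := norm_add_le _ _
    _ ≤ ‖J f n x 0 y‖ + ‖J f 0 n n y‖ + ‖J f 0 n 0 n - Ilim f‖ := by
        have := norm_add_le (J f n x 0 y) (J f 0 n n y); linarith
    _ < ε := by linarith

end RegConvAux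

namespace RegConvAux

variable {f : ℝ × ℝ → ℂ}
variable (hloc : ∀ a₁ b₁ a₂ b₂ : ℝ, 0 ≤ a₁ → 0 ≤ a₂ →
      IntegrableOn f (Icc a₁ b₁ ×ˢ Icc a₂ b₂))

include hloc

lemma backward {I : ℂ} {H V : ℝ → ℝ → ℂ}
    (hP : ∀ ε : ℝ, 0 < ε → ∃ ρ : ℝ, 0 < ρ ∧ ∀ x y : ℝ, ρ < x → ρ < y →
      ‖J f 0 x 0 y - I‖ < ε)
    (hH : ∀ c ε : ℝ, 0 < c → 0 < ε → ∃ ρ₃ : ℝ, 0 < ρ₃ ∧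
      ∀ y y₁ x₁ : ℝ, 0 ≤ y → y < y₁ → y₁ ≤ c → ρ₃ < x₁ →
        ‖J f 0 x₁ y y₁ - H y y₁‖ < ε)
    (hV : ∀ c ε : ℝ, 0 < c → 0 < ε → ∃ ρ₃ : ℝ, 0 < ρ₃ ∧
      ∀ x x₁ y₁ : ℝ, 0 ≤ x → x < x₁ → x₁ ≤ c → ρ₃ < y₁ →
        ‖J f x x₁ 0 y₁ - V x x₁‖ < ε) :
    ∀ ε : ℝ, 0 < ε → ∃ ρ : ℝ, 0 < ρ ∧ ∀ x x₁ y y₁ : ℝ,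
      0 ≤ x → x < x₁ → 0 ≤ y → y < y₁ → ρ < max x y →
      ‖J f x x₁ y y₁‖ < ε := by
  intro ε hε
  obtain ⟨ρ₁, hρ₁, hP'⟩ := hP (ε / 16) (by positivity)
  set a : ℝ := ρ₁ + 1 with ha
  have ha0 : 0 < a := by positivity
  have hρ₁a : ρ₁ < a := by rw [ha]; linarith
  obtain ⟨ρH, hρH, hH'⟩ := hH a (ε / 8) ha0 (by positivity)
  obtain ⟨ρV, hρV, hV'⟩ := hV a (ε / 8) ha0 (by positivity)
  refine ⟨max a (max ρH ρV), by positivity, ?_⟩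
  intro x x₁ y y₁ hx hx' hy hy' hmax
  -- Pringsheim four-term bound
  have P4 : ∀ u u₁ v v₁ : ℝ, ρ₁ < u → u ≤ u₁ → ρ₁ < v → v ≤ v₁ →
      ‖J f u u₁ v v₁‖ ≤ ε / 4 := by
    intro u u₁ v v₁ h1 h2 h3 h4
    have hu0 : 0 ≤ u := (hρ₁.trans h1).le
    have hv0 : 0 ≤ v := (hρ₁.trans h3).le
    rw [four_term hloc hu0 h2 hv0 h4]
    have e1 := hP' u₁ v₁ (h1.trans_le h2) (h3.trans_le h4)
    have e2 := hP' u v₁ h1 (h3.trans_le h4)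
    have e3 := hP' u₁ v (h1.trans_le h2) h3
    have e4 := hP' u v h1 h3
    have key : J f 0 u₁ 0 v₁ - J f 0 u 0 v₁ - J f 0 u₁ 0 v + J f 0 u 0 v
        = (J f 0 u₁ 0 v₁ - I) - (J f 0 u 0 v₁ - I) - (J f 0 u₁ 0 v - I)
          + (J f 0 u 0 v - I) := by ring
    rw [key]
    have n1 := norm_add_le ((J f 0 u₁ 0 v₁ - I) - (J f 0 u 0 v₁ - I) - (J f 0 u₁ 0 v - I))
      (J f 0 u 0 v - I)
    have n2 := norm_sub_le ((J f 0 u₁ 0 v₁ - I) - (J f 0 u 0 v₁ - I)) (J f 0 u₁ 0 v - I)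
    have n3 := norm_sub_le (J f 0 u₁ 0 v₁ - I) (J f 0 u 0 v₁ - I)
    linarith
  -- horizontal strip bound
  have Hb : ∀ u u₁ v v₁ : ℝ, 0 ≤ v → v < v₁ → v₁ ≤ a → ρH < u → u ≤ u₁ →
      ‖J f u u₁ v v₁‖ ≤ ε / 4 := by
    intro u u₁ v v₁ h0 h1 h2 h3 h4
    have hu0 : 0 ≤ u := (hρH.trans h3).le
    have hsp : J f 0 u₁ v v₁ = J f 0 u v v₁ + J f u u₁ v v₁ :=
      msplit_h hloc le_rfl hu0 h4 h0
    have e1 := hH' v v₁ u₁ h0 h1 h2 (h3.trans_le h4)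
    have e2 := hH' v v₁ u h0 h1 h2 h3
    have key : J f u u₁ v v₁ = (J f 0 u₁ v v₁ - H v v₁) - (J f 0 u v v₁ - H v v₁) := by
      linear_combination -hsp
    rw [key]
    have := norm_sub_le (J f 0 u₁ v v₁ - H v v₁) (J f 0 u v v₁ - H v v₁)
    linarith
  -- vertical strip bound
  have Vb : ∀ u u₁ v v₁ : ℝ, 0 ≤ u → u < u₁ → u₁ ≤ a → ρV < v → v ≤ v₁ →
      ‖J f u u₁ v v₁‖ ≤ ε / 4 := by
    intro u u₁ v v₁ h0 h1 h2 h3 h4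
    have hv0 : 0 ≤ v := (hρV.trans h3).le
    have hsp : J f u u₁ 0 v₁ = J f u u₁ 0 v + J f u u₁ v v₁ :=
      msplit_v hloc h0 le_rfl hv0 h4
    have e1 := hV' u u₁ v₁ h0 h1 h2 (h3.trans_le h4)
    have e2 := hV' u u₁ v h0 h1 h2 h3
    have key : J f u u₁ v v₁ = (J f u u₁ 0 v₁ - V u u₁) - (J f u u₁ 0 v - V u u₁) := by
      linear_combination -hsp
    rw [key]
    have := norm_sub_le (J f u u₁ 0 v₁ - V u u₁) (J f u u₁ 0 v - V u u₁)
    linarith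
  rcases lt_max_iff.mp hmax with hxρ | hyρ
  · -- ρ < x
    have hax : a < x := (le_max_left _ _).trans_lt hxρ
    have hHx : ρH < x := ((le_max_left ρH ρV).trans (le_max_right a _)).trans_lt hxρ
    rcases le_or_gt a y with hya | hya
    · have := P4 x x₁ y y₁ (hρ₁a.trans hax) hx'.le (hρ₁a.trans_le hya) hy'.le
      linarith
    · rcases le_or_gt y₁ a with hy₁ | hy₁
      · have := Hb x x₁ y y₁ hy hy' hy₁ hHx hx'.le
        linarith
      · have hsp : J f x x₁ y y₁ = J f x x₁ y a + J f x x₁ a y₁ :=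
          msplit_v hloc hx hy hya.le hy₁.le
        have t1 := Hb x x₁ y a hy hya le_rfl hHx hx'.le
        have t2 := P4 x x₁ a y₁ (hρ₁a.trans hax) hx'.le hρ₁a hy₁.le
        rw [hsp]
        have := norm_add_le (J f x x₁ y a) (J f x x₁ a y₁)
        linarith
  · -- ρ < y
    have hay : a < y := (le_max_left _ _).trans_lt hyρ
    have hVy : ρV < y := ((le_max_right ρH ρV).trans (le_max_right a _)).trans_lt hyρ
    rcases le_or_gt a x with hxa | hxa
    · have := P4 x x₁ y y₁ (hρ₁a.trans_le hxa) hx'.le (hρ₁a.trans hay) hy'.le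
      linarith
    · rcases le_or_gt x₁ a with hx₁ | hx₁
      · have := Vb x x₁ y y₁ hx hx' hx₁ hVy hy'.le
        linarith
      · have hsp : J f x x₁ y y₁ = J f x a y y₁ + J f a x₁ y y₁ :=
          msplit_h hloc hx hxa.le hx₁.le hy
        have t1 := Vb x a y y₁ hx hxa le_rfl hVy hy'.le
        have t2 := P4 a x₁ y y₁ hρ₁a hx₁.le (hρ₁a.trans hay) hy'.le
        rw [hsp]
        have := norm_add_le (J f x a y y₁) (J f a x₁ y y₁)
        linarith

end RegConvAux


/-- **Theorem 2.** Let `f : [0,∞)² → ℂ` be locally Lebesgue integrable. The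
double integral `∫₀^∞∫₀^∞ f` converges regularly if and only if (i) it converges in
Pringsheim's sense, and (ii) the horizontal strip integrals `∫₀^{x₁} ∫_y^{y₁} f` have finite
limits as `x₁ → ∞` locally uniformly in `(y, y₁)` with `y₁ > y ≥ 0`, and the vertical strip
integrals `∫_x^{x₁} ∫₀^{y₁} f` have finite limits as `y₁ → ∞` locally uniformly in
`(x, x₁)` with `x₁ > x ≥ 0`. -/
theorem regular_convergence_iff_pringsheim_and_strips (f : ℝ × ℝ → ℂ)
    (hloc : ∀ a₁ b₁ a₂ b₂ : ℝ, 0 ≤ a₁ → 0 ≤ a₂ →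
      IntegrableOn f (Icc a₁ b₁ ×ˢ Icc a₂ b₂)) :
    (∀ ε : ℝ, 0 < ε → ∃ ρ : ℝ, 0 < ρ ∧ ∀ x x₁ y y₁ : ℝ,
      0 ≤ x → x < x₁ → 0 ≤ y → y < y₁ → ρ < max x y →
      ‖∫ p in Ioc x x₁ ×ˢ Ioc y y₁, f p‖ < ε) ↔
    ((∃ I : ℂ, ∀ ε : ℝ, 0 < ε → ∃ ρ : ℝ, 0 < ρ ∧ ∀ x y : ℝ, ρ < x → ρ < y →
        ‖(∫ p in Ioc (0:ℝ) x ×ˢ Ioc (0:ℝ) y, f p) - I‖ < ε) ∧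
      (∃ H : ℝ → ℝ → ℂ, ∀ c ε : ℝ, 0 < c → 0 < ε → ∃ ρ₃ : ℝ, 0 < ρ₃ ∧
        ∀ y y₁ x₁ : ℝ, 0 ≤ y → y < y₁ → y₁ ≤ c → ρ₃ < x₁ →
          ‖(∫ p in Ioc (0:ℝ) x₁ ×ˢ Ioc y y₁, f p) - H y y₁‖ < ε) ∧
      (∃ V : ℝ → ℝ → ℂ, ∀ c ε : ℝ, 0 < c → 0 < ε → ∃ ρ₃ : ℝ, 0 < ρ₃ ∧
        ∀ x x₁ y₁ : ℝ, 0 ≤ x → x < x₁ → x₁ ≤ c → ρ₃ < y₁ →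
          ‖(∫ p in Ioc x x₁ ×ˢ Ioc (0:ℝ) y₁, f p) - V x x₁‖ < ε)) := by
  have e : ∀ x x₁ y y₁ : ℝ,
      (∫ p in Ioc x x₁ ×ˢ Ioc y y₁, f p) = RegConvAux.J f x x₁ y y₁ := fun _ _ _ _ => rfl
  simp only [e]
  constructor
  · intro h
    exact ⟨⟨RegConvAux.Ilim f, RegConvAux.pringsheim_est hloc h⟩,
      ⟨RegConvAux.Hlim f, RegConvAux.strip_est_h hloc h⟩,
      ⟨RegConvAux.Vlim f, RegConvAux.strip_est_v hloc h⟩⟩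
  · rintro ⟨⟨I, hP⟩, ⟨H, hH⟩, ⟨V, hV⟩⟩
    exact RegConvAux.backward hloc hP hH hV
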